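/- Let U ∈ RL^2 with ‖U‖_2 = 1 be such that U is orthogonal to e^{inθ}U for every integer n ≥ 1. Then ∫_{-π}^{π} e^{inθ} |U(e^{iθ})|^2 dθ = 0 for all integers n ≠ 0, and consequently |U| = 1 almost everywhere on T. -/

import Mathlib

open MeasureTheory Complex
open scoped ENNReal NNReal BoundedContinuousFunction

noncomputable section

instance : Fact (0 < 2 * Real.pi) := ⟨Real.two_pi_pos⟩

/-- The unit circle, modelled as `ℝ / 2πℤ`, with normalized Haar (Lebesgue) measure
of total mass `1`. -/
abbrev 𝕋 : Type := AddCircle (2 * Real.pi)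

abbrev μT : Measure 𝕋 := AddCircle.haarAddCircle

/-- The integral of any nontrivial character vanishes. -/
lemma integral_fourier_eq_zero {n : ℤ} (hn : n ≠ 0) :
    ∫ t, fourier n t ∂μT = 0 := by
  have h := integral_add_right_eq_self (μ := μT) (fun x : 𝕋 => fourier n x)
    ((2 * Real.pi / 2 / n : ℝ) : 𝕋)
  have h2 : ∀ x : 𝕋, fourier n (x + ((2 * Real.pi / 2 / n : ℝ) : 𝕋)) = -fourier n x :=
    fun x => fourier_add_half_inv_index hn Real.two_pi_pos x
  simp_rw [h2, integral_neg] at h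
  linear_combination (-(1 : ℂ) / 2) * h

/-- Let `U ∈ RL²` with `‖U‖₂ = 1` be orthogonal to `e^{inθ}U` for every integer `n ≥ 1`
(with respect to the inner product `⟨f,g⟩ = ∫ f ⋅ conj g dθ/2π`).  Then
`∫ e^{inθ}|U|² dθ = 0` for every integer `n ≠ 0`, and consequently `|U| = 1` almost
everywhere. -/
theorem unimodular_of_orthogonal_shifts
    (U : Lp ℂ 2 μT)
    (hUreal : ∀ n : ℤ, (fourierCoeff (U : 𝕋 → ℂ) n).im = 0)
    (hUnorm : ‖U‖ = 1)
    (hUorth : ∀ n : ℤ, 1 ≤ n →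
      ∫ t, (U : 𝕋 → ℂ) t * starRingEnd ℂ (fourier n t * (U : 𝕋 → ℂ) t) ∂μT = 0) :
    (∀ n : ℤ, n ≠ 0 →
      ∫ t, fourier n t * ((‖(U : 𝕋 → ℂ) t‖ : ℂ))^2 ∂μT = 0) ∧
    ∀ᵐ t ∂μT, ‖(U : 𝕋 → ℂ) t‖ = 1 := by
  classical
  set V : 𝕋 → ℂ := (U : 𝕋 → ℂ) with hV
  have habs : ∀ z : ℂ, ((‖z‖ : ℂ))^2 = (starRingEnd ℂ) z * z := fun z => by
    rw [← Complex.normSq_eq_conj_mul_self, ← Complex.sq_norm]; push_cast; ring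
  -- integrability of `|U|²`
  have hw_int : Integrable (fun t => (‖V t‖)^2) μT := by
    have h2 := (Lp.memLp U).integrable_norm_rpow (p := 2) two_ne_zero ENNReal.ofNat_ne_top
    have h3 : ∀ t : 𝕋, ‖V t‖ ^ (2 : ℝ≥0∞).toReal = (‖V t‖)^2 := by
      intro t
      rw [ENNReal.toReal_ofNat]
      norm_num [Real.rpow_natCast (‖V t‖) 2]
    simpa [h3] using h2
  have hcast : ∀ t, ((‖V t‖ : ℂ))^2 = (((‖V t‖)^2 : ℝ) : ℂ) := by
    intro t; push_cast; ring
  -- Part 1 : vanishing of the Fourier coefficients of `|U|²`.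
  have hkey : ∀ n : ℤ, 1 ≤ n →
      ∫ t, fourier (-n) t * ((‖V t‖ : ℂ))^2 ∂μT = 0 := by
    intro n hn
    have h := hUorth n hn
    have heq : ∀ t : 𝕋, V t * (starRingEnd ℂ) (fourier n t * V t)
        = fourier (-n) t * ((‖V t‖ : ℂ))^2 := by
      intro t
      rw [map_mul, habs (V t), fourier_neg]
      ring
    simp_rw [heq] at h
    exact h
  have part1 : ∀ n : ℤ, n ≠ 0 →
      ∫ t, fourier n t * ((‖V t‖ : ℂ))^2 ∂μT = 0 := by
    intro n hn
    rcases hn.lt_or_gt with h | h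
    · have := hkey (-n) (by omega)
      simpa using this
    · have h2 := hkey n (by omega)
      have h3 : ∫ t, fourier n t * ((‖V t‖ : ℂ))^2 ∂μT
          = (starRingEnd ℂ) (∫ t, fourier (-n) t * ((‖V t‖ : ℂ))^2 ∂μT) := by
        rw [← integral_conj]
        refine integral_congr_ae (Filter.Eventually.of_forall fun t => ?_)
        simp only [map_mul, map_pow, Complex.conj_ofReal]
        rw [← fourier_neg, neg_neg]
      rw [h3, h2, map_zero]
  -- total mass
  have hsum : ∫ t, ((‖V t‖ : ℂ))^2 ∂μT = 1 := by
    have hinner : (inner ℂ U U : ℂ) = ∫ t, (inner ℂ (V t) (V t) : ℂ) ∂μT := L2.inner_def U U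
    have h1 : (inner ℂ U U : ℂ) = 1 := by
      rw [inner_self_eq_norm_sq_to_K, hUnorm]; norm_num
    have h2 : ∀ t : 𝕋, (inner ℂ (V t) (V t) : ℂ) = ((‖V t‖ : ℂ))^2 := by
      intro t
      rw [RCLike.inner_apply', habs]
    rw [h1] at hinner
    simp_rw [h2] at hinner
    exact hinner.symm
  -- the integrable weight
  set w : 𝕋 → ℂ := fun t => ((‖V t‖ : ℂ))^2 with hwdef
  have hwint : Integrable w μT := by
    have : w = fun t => (((‖V t‖)^2 : ℝ) : ℂ) := funext hcast
    rw [this]; exact hw_int.ofReal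
  have hint_mul : ∀ f : C(𝕋, ℂ), Integrable (fun t => f t * w t) μT := by
    intro f
    exact hwint.bdd_mul (c := ‖f‖) f.continuous.aestronglyMeasurable
      (Filter.Eventually.of_forall fun x => f.norm_coe_le_norm x)
  have hint_f : ∀ f : C(𝕋, ℂ), Integrable (fun t => f t) μT := fun f =>
    (BoundedContinuousFunction.mkOfCompact f).integrable μT
  -- the continuous linear functional `f ↦ ∫ f w - ∫ f`
  let Ψlin : C(𝕋, ℂ) →ₗ[ℂ] ℂ :=
    { toFun := fun f => (∫ t, f t * w t ∂μT) - ∫ t, f t ∂μT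
      map_add' := by
        intro f g
        simp only [ContinuousMap.add_apply, add_mul]
        rw [integral_add (hint_mul f) (hint_mul g), integral_add (hint_f f) (hint_f g)]
        ring
      map_smul' := by
        intro c f
        simp only [ContinuousMap.smul_apply, smul_eq_mul, RingHom.id_apply, mul_assoc]
        rw [integral_const_mul, integral_const_mul]
        ring }
  have hbound : ∀ f : C(𝕋, ℂ),
      ‖Ψlin f‖ ≤ ((∫ t, ‖w t‖ ∂μT) + 1) * ‖f‖ := by
    intro f
    have hb1 : ‖∫ t, f t * w t ∂μT‖ ≤ ‖f‖ * ∫ t, ‖w t‖ ∂μT := by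
      refine (norm_integral_le_integral_norm _).trans ?_
      rw [← integral_const_mul]
      refine integral_mono (hint_mul f).norm ((hwint.norm).const_mul _) fun t => ?_
      simp only [norm_mul]
      exact mul_le_mul_of_nonneg_right
        (by simpa using f.norm_coe_le_norm t) (norm_nonneg _)
    have hb2 : ‖∫ t, f t ∂μT‖ ≤ ‖f‖ := by
      refine (norm_integral_le_integral_norm _).trans ?_
      have : ∫ t, ‖f t‖ ∂μT ≤ ∫ _t, ‖f‖ ∂μT :=
        integral_mono (hint_f f).norm (integrable_const _) fun t => f.norm_coe_le_norm t
      simpa using this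
    calc ‖Ψlin f‖ ≤ ‖∫ t, f t * w t ∂μT‖ + ‖∫ t, f t ∂μT‖ := norm_sub_le _ _
      _ ≤ ‖f‖ * (∫ t, ‖w t‖ ∂μT) + ‖f‖ := add_le_add hb1 hb2
      _ = ((∫ t, ‖w t‖ ∂μT) + 1) * ‖f‖ := by ring
  let Ψ : C(𝕋, ℂ) →L[ℂ] ℂ := Ψlin.mkContinuous _ hbound
  have hΨfourier : ∀ n : ℤ, Ψ (fourier n) = 0 := by
    intro n
    show (∫ t, fourier n t * w t ∂μT) - ∫ t, fourier n t ∂μT = 0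
    by_cases hn : n = 0
    · subst hn
      simp_rw [fourier_zero, one_mul]
      rw [hwdef, hsum]
      simp
    · rw [hwdef, part1 n hn, integral_fourier_eq_zero hn, sub_zero]
  have hΨ0 : ∀ f : C(𝕋, ℂ), Ψ f = 0 := by
    intro f
    have hle : Submodule.span ℂ (Set.range (@fourier (2 * Real.pi))) ≤ LinearMap.ker (Ψ : C(𝕋, ℂ) →ₗ[ℂ] ℂ) := by
      rw [Submodule.span_le]
      rintro - ⟨n, rfl⟩
      exact hΨfourier n
    have hmem : f ∈ closure
        ((Submodule.span ℂ (Set.range (@fourier (2 * Real.pi)))) : Set C(𝕋, ℂ)) := by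
      have htop := span_fourier_closure_eq_top (T := 2 * Real.pi)
      have : f ∈ (Submodule.span ℂ (Set.range (@fourier (2 * Real.pi)))).topologicalClosure := by
        rw [htop]; trivial
      exact this
    have heq : Set.EqOn (⇑Ψ) (fun _ => (0 : ℂ))
        ((Submodule.span ℂ (Set.range (@fourier (2 * Real.pi)))) : Set C(𝕋, ℂ)) :=
      fun g hg => hle hg
    exact heq.closure Ψ.continuous continuous_const hmem
  have claimA : ∀ f : C(𝕋, ℂ), ∫ t, f t * w t ∂μT = ∫ t, f t ∂μT := by
    intro f
    have h : (∫ t, f t * w t ∂μT) - ∫ t, f t ∂μT = 0 := hΨ0 f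
    exact sub_eq_zero.mp h
  -- the measure `|U|² dμ` coincides with `μ`
  set g : 𝕋 → ℝ := fun t => (‖V t‖)^2 with hgdef
  have hgmeas : Measurable g :=
    (continuous_norm.measurable.comp (Lp.stronglyMeasurable U).measurable).pow_const 2
  set d : 𝕋 → ℝ≥0∞ := fun t => ENNReal.ofReal (g t) with hddef
  have hdmeas : Measurable d := ENNReal.measurable_ofReal.comp hgmeas
  have hfin : IsFiniteMeasure (μT.withDensity d) :=
    isFiniteMeasure_withDensity_ofReal hw_int.2
  have hνμ : μT.withDensity d = μT := by
    refine ext_of_forall_lintegral_eq_of_IsFiniteMeasure (fun f => ?_)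
    have hfc : Continuous fun t : 𝕋 => ((f t : ℝ) : ℂ) :=
      Complex.continuous_ofReal.comp (NNReal.continuous_coe.comp f.continuous)
    have hA := claimA ⟨fun t => ((f t : ℝ) : ℂ), hfc⟩
    simp only [ContinuousMap.coe_mk] at hA
    -- real form of `claimA`
    have hre : ∫ t, (f t : ℝ) * g t ∂μT = ∫ t, (f t : ℝ) ∂μT := by
      have h1 : ∫ t, (((f t : ℝ) * g t : ℝ) : ℂ) ∂μT = ∫ t, (((f t : ℝ) : ℝ) : ℂ) ∂μT := by
        have : ∀ t, (((f t : ℝ) * g t : ℝ) : ℂ) = ((f t : ℝ) : ℂ) * w t := by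
          intro t
          simp only [hwdef, hgdef]
          push_cast
          ring
        simp_rw [this]
        exact hA
      have h2 : ((∫ t, (f t : ℝ) * g t ∂μT : ℝ) : ℂ) = ((∫ t, (f t : ℝ) ∂μT : ℝ) : ℂ) :=
        integral_ofReal.symm.trans (h1.trans integral_ofReal)
      exact_mod_cast h2
    have hgf_int : Integrable (fun t => (f t : ℝ) * g t) μT :=
      hw_int.bdd_mul (c := (nndist 0 f : ℝ))
        (NNReal.continuous_coe.comp f.continuous).aestronglyMeasurable
        (Filter.Eventually.of_forall fun t => by
          rw [Real.norm_of_nonneg (f t).coe_nonneg]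
          exact_mod_cast f.apply_le_nndist_zero t)
    rw [lintegral_withDensity_eq_lintegral_mul μT hdmeas f.measurable_coe_ennreal_comp]
    have hmul : ∀ t : 𝕋, (d * fun a : 𝕋 => ((f a : ℝ≥0∞))) t
        = ENNReal.ofReal ((f t : ℝ) * g t) := by
      intro t
      simp only [Pi.mul_apply, hddef]
      rw [ENNReal.ofReal_mul (f t).coe_nonneg, ENNReal.ofReal_coe_nnreal]
      ring
    have hfint : Integrable (fun t : 𝕋 => (f t : ℝ)) μT := f.integrable_of_nnreal μT
    simp_rw [hmul, ← ENNReal.ofReal_coe_nnreal]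
    rw [← ofReal_integral_eq_lintegral_ofReal hgf_int
        (Filter.Eventually.of_forall fun t => by
          have h0 : (0:ℝ) ≤ g t := sq_nonneg _
          exact mul_nonneg (f t).coe_nonneg h0),
      ← ofReal_integral_eq_lintegral_ofReal hfint
        (Filter.Eventually.of_forall fun t => (f t).coe_nonneg),
      hre]
  -- conclude `|U|² = 1` a.e.
  have hd1 : d =ᵐ[μT] fun _ => (1 : ℝ≥0∞) := by
    have h1 : μT.withDensity d = μT.withDensity (fun _ => 1) := by
      rw [hνμ]
      exact (withDensity_one (μ := μT)).symm
    exact (withDensity_eq_iff_of_sigmaFinite hdmeas.aemeasurable aemeasurable_const).mp h1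
  have hae : ∀ᵐ t ∂μT, ‖V t‖ = 1 := by
    filter_upwards [hd1] with t ht
    have hg1 : g t = 1 := by
      have ht' : ENNReal.ofReal (g t) = 1 := ht
      have h0 : (0:ℝ) ≤ g t := sq_nonneg _
      have := (ENNReal.ofReal_eq_one).mp ht'
      exact this
    have hfac : (‖V t‖ - 1) * (‖V t‖ + 1) = 0 := by
      have : (‖V t‖)^2 = 1 := hg1
      nlinarith [this]
    rcases mul_eq_zero.mp hfac with h | h
    · linarith
    · have := norm_nonneg (V t); linarith
  exact ⟨part1, hae⟩

end
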